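/- For 0 ≤ α ≤ 1, the function f_Nsc(x; α, m) := ((1-α)/4)·Q(x; 1, m, 2√α/(√α+1)) + (α/2)‖x‖² is (α, 1)-smooth, i.e., (α/2)‖x-y‖² ≤ f_Nsc(x) - f_Nsc(y) - ⟨∇f_Nsc(y), x-y⟩ ≤ (1/2)‖x-y‖² for all x, y ∈ ℝ^m. -/

import Mathlib

open scoped RealInnerProductSpace BigOperators

/-- Nesterov's chain quadratic `Q(x; ξ, m, ζ)` on `ℝ^{n+1}` (so `m = n+1 ≥ 1`). -/
noncomputable def Qfun {n : ℕ} (ξ ζ : ℝ) (x : EuclideanSpace ℝ (Fin (n + 1))) : ℝ :=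
  ξ / 2 * (x 0 - 1) ^ 2 + 1 / 2 * ∑ t : Fin n, (x t.succ - x t.castSucc) ^ 2
    + ζ / 2 * (x (Fin.last n)) ^ 2

/-- Nesterov's strongly convex hard function `f_Nsc(x; α, m)` on `ℝ^{n+1}`. -/
noncomputable def fNsc {n : ℕ} (α : ℝ) (x : EuclideanSpace ℝ (Fin (n + 1))) : ℝ :=
  (1 - α) / 4 * Qfun 1 (2 * Real.sqrt α / (Real.sqrt α + 1)) x + α / 2 * ‖x‖ ^ 2

namespace FNscAux

noncomputable def zeta (α : ℝ) : ℝ := 2 * Real.sqrt α / (Real.sqrt α + 1)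

lemma zeta_nonneg (α : ℝ) : 0 ≤ zeta α := by
  unfold zeta
  have := Real.sqrt_nonneg α
  positivity

lemma zeta_le_two (α : ℝ) : zeta α ≤ 2 := by
  unfold zeta
  have h := Real.sqrt_nonneg α
  rw [div_le_iff₀ (by positivity)]
  nlinarith

/-- Quadratic remainder part of `fNsc`. -/
noncomputable def Bq (n : ℕ) (α : ℝ) (d : EuclideanSpace ℝ (Fin (n + 1))) : ℝ :=
  (1 - α) / 4 * (1 / 2 * (d 0) ^ 2 + 1 / 2 * ∑ t : Fin n, (d t.succ - d t.castSucc) ^ 2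
      + zeta α / 2 * (d (Fin.last n)) ^ 2) + α / 2 * ‖d‖ ^ 2

/-- Candidate derivative of `fNsc` at `y`. -/
noncomputable def Lnsc (n : ℕ) (α : ℝ) (y : EuclideanSpace ℝ (Fin (n + 1))) :
    EuclideanSpace ℝ (Fin (n + 1)) →L[ℝ] ℝ :=
  ((1 - α) / 4) • ((y 0 - 1) • EuclideanSpace.proj (0 : Fin (n + 1))
      + ∑ t : Fin n, (y t.succ - y t.castSucc) •
          (EuclideanSpace.proj (t.succ : Fin (n + 1)) - EuclideanSpace.proj (t.castSucc : Fin (n + 1)))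
      + (zeta α * y (Fin.last n)) • EuclideanSpace.proj (Fin.last n))
    + α • (innerSL ℝ y)

lemma Lnsc_apply (n : ℕ) (α : ℝ) (y d : EuclideanSpace ℝ (Fin (n + 1))) :
    Lnsc n α y d = (1 - α) / 4 * ((y 0 - 1) * d 0
      + ∑ t : Fin n, (y t.succ - y t.castSucc) * (d t.succ - d t.castSucc)
      + zeta α * y (Fin.last n) * d (Fin.last n)) + α * ⟪y, d⟫ := by
  simp [Lnsc, ContinuousLinearMap.sum_apply, mul_sub, mul_add, mul_comm]

lemma expand (n : ℕ) (α : ℝ) (y d : EuclideanSpace ℝ (Fin (n + 1))) :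
    fNsc α (y + d) = fNsc α y + Lnsc n α y d + Bq n α d := by
  have hsum : ∑ t : Fin n, (y t.succ + d t.succ - (y t.castSucc + d t.castSucc)) ^ 2
      = ∑ t : Fin n, (y t.succ - y t.castSucc) ^ 2
        + 2 * ∑ t : Fin n, (y t.succ - y t.castSucc) * (d t.succ - d t.castSucc)
        + ∑ t : Fin n, (d t.succ - d t.castSucc) ^ 2 := by
    rw [Finset.mul_sum, ← Finset.sum_add_distrib, ← Finset.sum_add_distrib]
    exact Finset.sum_congr rfl fun t _ => by ring
  simp only [fNsc, Qfun, Lnsc_apply, Bq, zeta, PiLp.add_apply]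
  rw [hsum, norm_add_sq_real]
  ring

lemma norm_sq_eq (n : ℕ) (d : EuclideanSpace ℝ (Fin (n + 1))) :
    ‖d‖ ^ 2 = ∑ i : Fin (n + 1), (d i) ^ 2 := by
  rw [← real_inner_self_eq_norm_sq]
  simp only [PiLp.inner_apply, RCLike.inner_apply, conj_trivial, sq]

lemma le_Bq (n : ℕ) (α : ℝ) (hα0 : 0 ≤ α) (hα1 : α ≤ 1) (d : EuclideanSpace ℝ (Fin (n + 1))) :
    α / 2 * ‖d‖ ^ 2 ≤ Bq n α d := by
  have hQ : 0 ≤ 1 / 2 * (d 0) ^ 2 + 1 / 2 * ∑ t : Fin n, (d t.succ - d t.castSucc) ^ 2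
      + zeta α / 2 * (d (Fin.last n)) ^ 2 := by
    have h1 : (0:ℝ) ≤ ∑ t : Fin n, (d t.succ - d t.castSucc) ^ 2 :=
      Finset.sum_nonneg fun t _ => sq_nonneg _
    have h2 := zeta_nonneg α
    have h3 := sq_nonneg (d 0)
    have h4 := sq_nonneg (d (Fin.last n))
    have h5 : 0 ≤ zeta α / 2 * (d (Fin.last n)) ^ 2 := by positivity
    linarith
  have h1α : (0:ℝ) ≤ (1 - α) / 4 := by linarith
  have := mul_nonneg h1α hQ
  unfold Bq
  linarith

lemma Bq_le (n : ℕ) (α : ℝ) (hα0 : 0 ≤ α) (hα1 : α ≤ 1) (d : EuclideanSpace ℝ (Fin (n + 1))) :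
    Bq n α d ≤ 1 / 2 * ‖d‖ ^ 2 := by
  set S := ∑ i : Fin (n + 1), (d i) ^ 2 with hS
  have hns : ‖d‖ ^ 2 = S := norm_sq_eq n d
  have h1 : S = (d 0) ^ 2 + ∑ t : Fin n, (d t.succ) ^ 2 := Fin.sum_univ_succ _
  have h2 : S = ∑ t : Fin n, (d t.castSucc) ^ 2 + (d (Fin.last n)) ^ 2 :=
    Fin.sum_univ_castSucc _
  have h3 : ∑ t : Fin n, (d t.succ - d t.castSucc) ^ 2
      ≤ 2 * ∑ t : Fin n, (d t.succ) ^ 2 + 2 * ∑ t : Fin n, (d t.castSucc) ^ 2 := by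
    rw [Finset.mul_sum, Finset.mul_sum, ← Finset.sum_add_distrib]
    exact Finset.sum_le_sum fun t _ => by nlinarith [sq_nonneg (d t.succ + d t.castSucc)]
  have hz2 := zeta_le_two α
  have hz0 := zeta_nonneg α
  have hQ : 1 / 2 * (d 0) ^ 2 + 1 / 2 * ∑ t : Fin n, (d t.succ - d t.castSucc) ^ 2
      + zeta α / 2 * (d (Fin.last n)) ^ 2 ≤ 2 * S := by
    have hk : 0 ≤ (1 - zeta α / 2) * (d (Fin.last n)) ^ 2 :=
      mul_nonneg (by linarith) (sq_nonneg _)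
    have hzw : zeta α / 2 * (d (Fin.last n)) ^ 2 ≤ (d (Fin.last n)) ^ 2 := by nlinarith
    linarith [sq_nonneg (d 0)]
  have h1α : (0:ℝ) ≤ 1 - α := by linarith
  unfold Bq
  rw [hns]
  nlinarith [mul_nonneg h1α (sub_nonneg.2 hQ)]

lemma hasFDeriv (n : ℕ) (α : ℝ) (hα0 : 0 ≤ α) (hα1 : α ≤ 1)
    (y : EuclideanSpace ℝ (Fin (n + 1))) :
    HasFDerivAt (fNsc (n := n) α) (Lnsc n α y) y := by
  rw [hasFDerivAt_iff_isLittleO_nhds_zero]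
  have h : (fun h => fNsc α (y + h) - fNsc α y - Lnsc n α y h)
      = fun h : EuclideanSpace ℝ (Fin (n + 1)) => Bq n α h := by
    funext d
    rw [expand n α y d]; ring
  rw [h]
  have hbig : (fun h : EuclideanSpace ℝ (Fin (n + 1)) => Bq n α h)
      =O[nhds 0] fun h => ‖h‖ ^ 2 := by
    refine Asymptotics.IsBigO.of_bound 1 (Filter.Eventually.of_forall fun d => ?_)
    have hlo := le_Bq n α hα0 hα1 d
    have hhi := Bq_le n α hα0 hα1 d
    have h0 : (0:ℝ) ≤ α / 2 * ‖d‖ ^ 2 := by positivity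
    have hB0 : 0 ≤ Bq n α d := le_trans h0 hlo
    rw [Real.norm_eq_abs, Real.norm_eq_abs, abs_of_nonneg hB0, abs_of_nonneg (by positivity)]
    nlinarith [sq_nonneg ‖d‖]
  exact hbig.trans_isLittleO (Asymptotics.isLittleO_norm_pow_id one_lt_two)

end FNscAux

open FNscAux in
/-- `f_Nsc(·; α, m)` is `(α, 1)`-smooth for `0 ≤ α ≤ 1`. -/
theorem fNsc_alpha_one_smooth (n : ℕ) (α : ℝ) (hα0 : 0 ≤ α) (hα1 : α ≤ 1)
    (x y : EuclideanSpace ℝ (Fin (n + 1))) :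
    α / 2 * ‖x - y‖ ^ 2 ≤
        fNsc α x - fNsc α y - ⟪gradient (fNsc (n := n) α) y, x - y⟫ ∧
      fNsc α x - fNsc α y - ⟪gradient (fNsc (n := n) α) y, x - y⟫ ≤ 1 / 2 * ‖x - y‖ ^ 2 := by
  have hgrad : ⟪gradient (fNsc (n := n) α) y, x - y⟫ = Lnsc n α y (x - y) := by
    rw [gradient, InnerProductSpace.toDual_symm_apply, (hasFDeriv n α hα0 hα1 y).fderiv]
  have hyx : y + (x - y) = x := by abel
  have hexp := expand n α y (x - y)
  rw [hyx] at hexp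
  have key : fNsc α x - fNsc α y - ⟪gradient (fNsc (n := n) α) y, x - y⟫ = Bq n α (x - y) := by
    rw [hgrad]; linarith
  rw [key]
  exact ⟨le_Bq n α hα0 hα1 (x - y), Bq_le n α hα0 hα1 (x - y)⟩
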